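/- For every μ ∈ ℝ there exists a constant C(μ) > 0 such that for all integers n ≥ 1 with 1 − μ/√n ≥ 0, the total mass of the weighted half-space kernel with reflection rate γ = 1 − μ/√n satisfies ∑_{x ∈ ℤ_{≥0}} p_{1−μ/√n}(n, 0, x) ≤ C(μ). (Equivalently, E[(1 − μ/√n)^{N_n}] is bounded uniformly in n, where N_n is the number of visits to 0 up to time n of the reflected simple random walk started at 0.) -/

import Mathlib

open MeasureTheory Real

/-- A reflecting path of length `n` on `ℤ_{≥0}`: nearest-neighbour steps away from `0`,
and a forced step `0 → 1` from the origin. -/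
def IsReflPath (n : ℕ) (S : Fin (n + 1) → ℕ) : Prop :=
  ∀ i : Fin n,
    (1 ≤ S i.castSucc → (S i.succ = S i.castSucc + 1 ∨ S i.succ + 1 = S i.castSucc)) ∧
    (S i.castSucc = 0 → S i.succ = 1)

/-- The step weight `w(S) = ∏_{i=0}^{n-1} q(S_i)` with `q(0) = 1`, `q(z) = 1/2` for `z ≥ 1`. -/
noncomputable def pathWeight (n : ℕ) (S : Fin (n + 1) → ℕ) : ℝ :=
  ∏ i : Fin n, if S i.castSucc = 0 then (1 : ℝ) else (1 / 2 : ℝ)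

/-- The number of visits to the origin `#{0 ≤ i ≤ n : S_i = 0}`. -/
def numZeros (n : ℕ) (S : Fin (n + 1) → ℕ) : ℕ :=
  (Finset.univ.filter (fun i : Fin (n + 1) => S i = 0)).card

/-- The reflecting paths of length `n` from `x` to `y`. -/
def ReflPaths (n x y : ℕ) : Set (Fin (n + 1) → ℕ) :=
  {S | S 0 = x ∧ S (Fin.last n) = y ∧ IsReflPath n S}

/-- The weighted half-space transition kernel
`p_γ(n,x,y) = ∑_S γ^{#{0 ≤ i ≤ n : S_i = 0}} w(S)`, summing over reflecting paths of
length `n` from `x` to `y`. -/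
noncomputable def pGamma (γ : ℝ) (n x y : ℕ) : ℝ :=
  ∑' S : ReflPaths n x y, γ ^ numZeros n S.1 * pathWeight n S.1




def pathsFrom (n x : ℕ) : Set (Fin (n + 1) → ℕ) := {S | S 0 = x ∧ IsReflPath n S}

lemma step_le {n : ℕ} {S : Fin (n+1) → ℕ} (h : IsReflPath n S) (i : Fin n) :
    S i.succ ≤ S i.castSucc + 1 := by
  rcases Nat.eq_zero_or_pos (S i.castSucc) with h0 | h1
  · rw [(h i).2 h0, h0]
  · rcases (h i).1 h1 with h2 | h2
    · omega
    · omega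

lemma path_le {n x : ℕ} {S : Fin (n+1) → ℕ} (hS : S ∈ pathsFrom n x) :
    ∀ i : Fin (n+1), S i ≤ x + i.val := by
  obtain ⟨h0, hp⟩ := hS
  suffices h : ∀ k (hk : k < n+1), S ⟨k, hk⟩ ≤ x + k by
    intro i; simpa using h i.val i.isLt
  intro k hk
  induction k with
  | zero => simpa using h0.le
  | succ m ih =>
    have hm : m < n := by omega
    have hstep : S ⟨m+1, hk⟩ ≤ S ⟨m, Nat.lt_of_succ_lt hk⟩ + 1 := step_le hp ⟨m, hm⟩
    have h2 := ih (Nat.lt_of_succ_lt hk)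
    omega

lemma pathsFrom_finite (n x : ℕ) : (pathsFrom n x).Finite := by
  have hsub : pathsFrom n x ⊆ Set.pi Set.univ (fun _ : Fin (n+1) => Set.Iic (x+n)) := by
    intro S hS
    intro i _
    have := path_le hS i
    have : S i ≤ x + n := le_trans this (by have := i.isLt; omega)
    simpa using this
  exact Set.Finite.subset (Set.Finite.pi (fun _ => Set.finite_Iic _)) hsub

noncomputable def finpaths (n x : ℕ) : Finset (Fin (n+1) → ℕ) :=
  (pathsFrom_finite n x).toFinset

lemma mem_finpaths {n x : ℕ} {S : Fin (n+1) → ℕ} :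
    S ∈ finpaths n x ↔ S 0 = x ∧ IsReflPath n S := by
  simp only [finpaths, Set.Finite.mem_toFinset]
  rfl

lemma reflPaths_finite (n x y : ℕ) : (ReflPaths n x y).Finite := by
  apply (pathsFrom_finite n x).subset
  rintro S ⟨h0, _, hp⟩; exact ⟨h0, hp⟩

def Zc (n : ℕ) (S : Fin (n+1) → ℕ) : ℕ :=
  (Finset.univ.filter (fun i : Fin n => S i.castSucc = 0)).card

noncomputable def Gsum (γ : ℝ) (φ : ℕ → ℝ) (n x : ℕ) : ℝ :=
  ∑ S ∈ finpaths n x, γ ^ Zc n S * pathWeight n S * φ (S (Fin.last n))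

lemma isReflPath_cons {n x : ℕ} {T : Fin (n+1) → ℕ} :
    IsReflPath (n+1) (Fin.cons x T) ↔
      ((1 ≤ x → (T 0 = x + 1 ∨ T 0 + 1 = x)) ∧ (x = 0 → T 0 = 1)) ∧ IsReflPath n T := by
  constructor
  · intro H
    refine ⟨?_, ?_⟩
    · have h0 := H 0
      simpa using h0
    · intro j
      have hj := H j.succ
      simpa [← Fin.succ_castSucc, Fin.cons_succ] using hj
  · rintro ⟨hb, hT⟩ i
    refine Fin.cases ?_ ?_ i
    · simpa using hb
    · intro j
      simpa [← Fin.succ_castSucc, Fin.cons_succ] using hT j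

lemma cons_mem_finpaths {n x v : ℕ} {T : Fin (n+1) → ℕ}
    (hT : T ∈ finpaths n v)
    (hv : (1 ≤ x → (v = x + 1 ∨ v + 1 = x)) ∧ (x = 0 → v = 1)) :
    Fin.cons x T ∈ finpaths (n+1) x := by
  rw [mem_finpaths] at hT ⊢
  obtain ⟨hT0, hTp⟩ := hT
  refine ⟨by simp, ?_⟩
  rw [isReflPath_cons]
  exact ⟨by rw [hT0]; exact hv, hTp⟩

lemma tail_mem_finpaths {n x : ℕ} {S : Fin (n+2) → ℕ}
    (hS : S ∈ finpaths (n+1) x) : Fin.tail S ∈ finpaths n (S 1) := by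
  rw [mem_finpaths] at hS ⊢
  obtain ⟨hS0, hSp⟩ := hS
  have := (Fin.cons_self_tail S).symm
  rw [hS0] at this
  rw [this] at hSp
  rw [isReflPath_cons] at hSp
  exact ⟨rfl, hSp.2⟩

lemma term_cons (γ : ℝ) (φ : ℕ → ℝ) (n x : ℕ) (T : Fin (n+1) → ℕ) :
    γ ^ Zc (n+1) (Fin.cons x T) * pathWeight (n+1) (Fin.cons x T) *
      φ ((Fin.cons x T : Fin (n+2) → ℕ) (Fin.last (n+1))) =
    (if x = 0 then γ else (1/2 : ℝ)) *
      (γ ^ Zc n T * pathWeight n T * φ (T (Fin.last n))) := by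
  have hZ : Zc (n+1) (Fin.cons x T) = (if x = 0 then 1 else 0) + Zc n T := by
    simp only [Zc, Finset.card_filter]
    rw [Fin.sum_univ_succ]
    simp [← Fin.succ_castSucc, Fin.cons_succ]
  have hW : pathWeight (n+1) (Fin.cons x T) =
      (if x = 0 then (1:ℝ) else (1/2 : ℝ)) * pathWeight n T := by
    simp only [pathWeight]
    rw [Fin.prod_univ_succ]
    simp [← Fin.succ_castSucc, Fin.cons_succ]
  have hE : (Fin.cons x T : Fin (n+2) → ℕ) (Fin.last (n+1)) = T (Fin.last n) := by
    rw [← Fin.succ_last, Fin.cons_succ]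
  rw [hZ, hW, hE]
  by_cases hx : x = 0 <;> simp [hx, pow_add] <;> ring

lemma first_step {n x : ℕ} {S : Fin (n+2) → ℕ} (hS : S ∈ finpaths (n+1) x) :
    (x = 0 → S 1 = 1) ∧ (1 ≤ x → (S 1 = x + 1 ∨ S 1 + 1 = x)) := by
  rw [mem_finpaths] at hS
  obtain ⟨hS0, hSp⟩ := hS
  have h := hSp 0
  simp only [Fin.castSucc_zero, Fin.succ_zero_eq_one, hS0] at h
  exact ⟨fun hx => h.2 hx, fun hx => h.1 hx⟩

lemma Gsum_succ_zero (γ : ℝ) (φ : ℕ → ℝ) (n : ℕ) :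
    Gsum γ φ (n+1) 0 = γ * Gsum γ φ n 1 := by
  unfold Gsum
  rw [Finset.mul_sum]
  refine Finset.sum_nbij' (fun S => Fin.tail S) (fun T => Fin.cons 0 T) ?_ ?_ ?_ ?_ ?_
  · intro S hS
    have h1 : S 1 = 1 := (first_step hS).1 rfl
    have := tail_mem_finpaths hS
    rwa [h1] at this
  · intro T hT
    exact cons_mem_finpaths hT ⟨fun h => by omega, fun _ => rfl⟩
  · intro S hS
    have hS0 : S 0 = 0 := (mem_finpaths.1 hS).1
    rw [← hS0]
    exact Fin.cons_self_tail S
  · intro T hT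
    exact Fin.tail_cons (α := fun _ => ℕ) 0 T
  · intro S hS
    have hS0 : S 0 = 0 := (mem_finpaths.1 hS).1
    conv_lhs => rw [← Fin.cons_self_tail S, hS0]
    rw [term_cons]
    simp

lemma Gsum_succ_pos (γ : ℝ) (φ : ℕ → ℝ) (n x : ℕ) :
    Gsum γ φ (n+1) (x+1) = (1/2 : ℝ) * (Gsum γ φ n (x+2) + Gsum γ φ n x) := by
  unfold Gsum
  rw [mul_add, Finset.mul_sum, Finset.mul_sum,
    ← Finset.sum_filter_add_sum_filter_not (finpaths (n+1) (x+1)) (fun S => S 1 = x+2)]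
  congr 1
  · refine Finset.sum_nbij' (fun S => Fin.tail S) (fun T => Fin.cons (x+1) T) ?_ ?_ ?_ ?_ ?_
    · intro S hS
      rw [Finset.mem_filter] at hS
      have := tail_mem_finpaths hS.1
      rwa [hS.2] at this
    · intro T hT
      have hT0 : T 0 = x + 2 := (mem_finpaths.1 hT).1
      rw [Finset.mem_filter]
      refine ⟨cons_mem_finpaths hT ⟨fun _ => Or.inl (by omega), fun h => by omega⟩, ?_⟩
      show (Fin.cons (x+1) T : Fin (n+2) → ℕ) 1 = x + 2
      rw [show (1 : Fin (n+2)) = Fin.succ 0 from rfl, Fin.cons_succ]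
      exact hT0
    · intro S hS
      rw [Finset.mem_filter] at hS
      have hS0 : S 0 = x+1 := (mem_finpaths.1 hS.1).1
      rw [← hS0]
      exact Fin.cons_self_tail S
    · intro T hT
      exact Fin.tail_cons (α := fun _ => ℕ) _ T
    · intro S hS
      rw [Finset.mem_filter] at hS
      have hS0 : S 0 = x+1 := (mem_finpaths.1 hS.1).1
      conv_lhs => rw [← Fin.cons_self_tail S, hS0]
      rw [term_cons]
      simp
  · refine Finset.sum_nbij' (fun S => Fin.tail S) (fun T => Fin.cons (x+1) T) ?_ ?_ ?_ ?_ ?_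
    · intro S hS
      rw [Finset.mem_filter] at hS
      have h1 : S 1 = x := by
        have := (first_step hS.1).2 (by omega)
        have h2 := hS.2
        omega
      have := tail_mem_finpaths hS.1
      rwa [h1] at this
    · intro T hT
      have hT0 : T 0 = x := (mem_finpaths.1 hT).1
      rw [Finset.mem_filter]
      refine ⟨cons_mem_finpaths hT ⟨fun _ => Or.inr (by omega), fun h => by omega⟩, ?_⟩
      show ¬ (Fin.cons (x+1) T : Fin (n+2) → ℕ) 1 = x + 2
      rw [show (1 : Fin (n+2)) = Fin.succ 0 from rfl, Fin.cons_succ]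
      omega
    · intro S hS
      rw [Finset.mem_filter] at hS
      have hS0 : S 0 = x+1 := (mem_finpaths.1 hS.1).1
      rw [← hS0]
      exact Fin.cons_self_tail S
    · intro T hT
      exact Fin.tail_cons (α := fun _ => ℕ) _ T
    · intro S hS
      rw [Finset.mem_filter] at hS
      have hS0 : S 0 = x+1 := (mem_finpaths.1 hS.1).1
      conv_lhs => rw [← Fin.cons_self_tail S, hS0]
      rw [term_cons]
      simp

lemma core (γ : ℝ) (φ : ℕ → ℝ) (c : ℝ) (hγ : 0 ≤ γ) (hφ : ∀ x, 0 ≤ φ x) (hc : 1 ≤ c)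
    (h0 : γ * φ 1 ≤ c * φ 0) (h1 : ∀ x : ℕ, φ (x+2) + φ x ≤ 2 * c * φ (x+1)) :
    ∀ n x, Gsum γ φ n x ≤ c ^ n * φ x := by
  intro n
  induction n with
  | zero =>
    intro x
    have hfp : finpaths 0 x = {fun _ => x} := by
      ext S
      rw [mem_finpaths]
      constructor
      · rintro ⟨h0', _⟩
        rw [Finset.mem_singleton]
        funext i
        rw [Fin.eq_zero i, h0']
      · rintro h
        rw [Finset.mem_singleton] at h
        subst h
        exact ⟨rfl, fun i => i.elim0⟩
    rw [Gsum, hfp]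
    simp [Zc, pathWeight]
  | succ n ih =>
    intro x
    have hc0 : (0:ℝ) ≤ c ^ n := pow_nonneg (by linarith) n
    cases x with
    | zero =>
      rw [Gsum_succ_zero]
      calc γ * Gsum γ φ n 1 ≤ γ * (c ^ n * φ 1) := by
            exact mul_le_mul_of_nonneg_left (ih 1) hγ
        _ = c ^ n * (γ * φ 1) := by ring
        _ ≤ c ^ n * (c * φ 0) := by
            exact mul_le_mul_of_nonneg_left h0 hc0
        _ = c ^ (n+1) * φ 0 := by ring
    | succ y =>
      rw [Gsum_succ_pos]
      calc (1/2 : ℝ) * (Gsum γ φ n (y+2) + Gsum γ φ n y)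
          ≤ (1/2 : ℝ) * (c ^ n * φ (y+2) + c ^ n * φ y) := by
            have := add_le_add (ih (y+2)) (ih y)
            linarith
        _ = (1/2 : ℝ) * c ^ n * (φ (y+2) + φ y) := by ring
        _ ≤ (1/2 : ℝ) * c ^ n * (2 * c * φ (y+1)) := by
            apply mul_le_mul_of_nonneg_left (h1 y)
            linarith
        _ = c ^ (n+1) * φ (y+1) := by ring

lemma pGamma_eq_sum (γ : ℝ) (n x y : ℕ) :
    pGamma γ n x y =
      ∑ S ∈ (reflPaths_finite n x y).toFinset, γ ^ numZeros n S * pathWeight n S := by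
  unfold pGamma
  rw [tsum_subtype (ReflPaths n x y) (fun S => γ ^ numZeros n S * pathWeight n S)]
  rw [tsum_eq_sum (s := (reflPaths_finite n x y).toFinset)
    (fun b hb => Set.indicator_of_notMem (by rwa [Set.Finite.mem_toFinset] at hb) _)]
  exact Finset.sum_congr rfl fun S hS =>
    Set.indicator_of_mem ((reflPaths_finite n x y).mem_toFinset.1 hS) _

lemma tsum_pGamma_eq (γ : ℝ) (n : ℕ) :
    ∑' y : ℕ, pGamma γ n 0 y =
      ∑ S ∈ finpaths n 0, γ ^ numZeros n S * pathWeight n S := by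
  have hzero : ∀ y ∉ Finset.range (n+1), pGamma γ n 0 y = 0 := by
    intro y hy
    rw [Finset.mem_range] at hy
    rw [pGamma_eq_sum]
    apply Finset.sum_eq_zero
    intro S hS
    rw [Set.Finite.mem_toFinset] at hS
    obtain ⟨h0, hl, hp⟩ := hS
    have := path_le (x := 0) ⟨h0, hp⟩ (Fin.last n)
    simp only [Fin.val_last, zero_add] at this
    omega
  rw [tsum_eq_sum hzero]
  have hmap : ∀ S ∈ finpaths n 0, S (Fin.last n) ∈ Finset.range (n+1) := by
    intro S hS
    rw [mem_finpaths] at hS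
    have := path_le hS (Fin.last n)
    simp only [Fin.val_last, zero_add] at this
    rw [Finset.mem_range]
    omega
  rw [← Finset.sum_fiberwise_of_maps_to hmap
    (fun S => γ ^ numZeros n S * pathWeight n S)]
  apply Finset.sum_congr rfl
  intro y _
  rw [pGamma_eq_sum]
  apply Finset.sum_congr _ (fun _ _ => rfl)
  apply Finset.ext
  intro S
  simp only [Finset.mem_filter, mem_finpaths, Set.Finite.mem_toFinset, ReflPaths,
    Set.mem_setOf_eq]
  constructor
  · rintro ⟨h0, hl, hp⟩
    exact ⟨⟨h0, hp⟩, hl⟩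
  · rintro ⟨⟨h0, hp⟩, hl⟩
    exact ⟨h0, hl, hp⟩

lemma numZeros_eq (n : ℕ) (S : Fin (n+1) → ℕ) :
    numZeros n S = Zc n S + (if S (Fin.last n) = 0 then 1 else 0) := by
  simp only [numZeros, Zc, Finset.card_filter]
  rw [Fin.sum_univ_castSucc]

lemma pathWeight_nonneg (n : ℕ) (S : Fin (n+1) → ℕ) : 0 ≤ pathWeight n S := by
  apply Finset.prod_nonneg
  intro i _
  split <;> norm_num

lemma mass_le (γ γ' c : ℝ) (φ : ℕ → ℝ) (n : ℕ)
    (hγ : 0 ≤ γ) (hγγ' : γ ≤ γ') (hγ'1 : 1 ≤ γ') (hc : 1 ≤ c)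
    (hφ1 : ∀ x, 1 ≤ φ x)
    (h0 : γ' * φ 1 ≤ c * φ 0) (h1 : ∀ x : ℕ, φ (x+2) + φ x ≤ 2 * c * φ (x+1)) :
    ∑ S ∈ finpaths n 0, γ ^ numZeros n S * pathWeight n S ≤ γ' * (c ^ n * φ 0) := by
  have hγ'0 : (0:ℝ) ≤ γ' := by linarith
  have hφ0 : ∀ x, 0 ≤ φ x := fun x => le_trans zero_le_one (hφ1 x)
  have step : ∀ S ∈ finpaths n 0,
      γ ^ numZeros n S * pathWeight n S ≤
        γ' * (γ' ^ Zc n S * pathWeight n S * φ (S (Fin.last n))) := by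
    intro S _
    have hw := pathWeight_nonneg n S
    have hZ0 : (0:ℝ) ≤ γ' ^ Zc n S := pow_nonneg hγ'0 _
    have e1 : γ ^ numZeros n S ≤ γ' ^ numZeros n S := pow_le_pow_left₀ hγ hγγ' _
    have e2 : γ' ^ numZeros n S ≤ γ' ^ Zc n S * γ' := by
      rw [numZeros_eq, pow_add]
      apply mul_le_mul_of_nonneg_left _ hZ0
      split
      · rw [pow_one]
      · rw [pow_zero]; exact hγ'1
    have e3 : γ ^ numZeros n S * pathWeight n S ≤ γ' ^ Zc n S * γ' * pathWeight n S := by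
      apply mul_le_mul_of_nonneg_right (le_trans e1 e2) hw
    calc γ ^ numZeros n S * pathWeight n S ≤ γ' ^ Zc n S * γ' * pathWeight n S := e3
      _ ≤ γ' ^ Zc n S * γ' * pathWeight n S * φ (S (Fin.last n)) := by
          apply le_mul_of_one_le_right _ (hφ1 _)
          positivity
      _ = γ' * (γ' ^ Zc n S * pathWeight n S * φ (S (Fin.last n))) := by ring
  calc ∑ S ∈ finpaths n 0, γ ^ numZeros n S * pathWeight n S
      ≤ ∑ S ∈ finpaths n 0, γ' * (γ' ^ Zc n S * pathWeight n S * φ (S (Fin.last n))) :=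
        Finset.sum_le_sum step
    _ = γ' * Gsum γ' φ n 0 := by rw [Gsum, Finset.mul_sum]
    _ ≤ γ' * (c ^ n * φ 0) := by
        apply mul_le_mul_of_nonneg_left _ hγ'0
        exact core γ' φ c hγ'0 hφ0 hc h0 h1 n 0

lemma sinh_le_two_mul {s : ℝ} (h0 : 0 ≤ s) (h : s ≤ 1/2) : Real.sinh s ≤ 2 * s := by
  rw [Real.sinh_eq]
  have h1 : 1 - s ≤ Real.exp (-s) := by
    have := Real.add_one_le_exp (-s)
    linarith
  have h2 : Real.exp s * Real.exp (-s) = 1 := by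
    rw [← Real.exp_add]; simp
  have h3 : (0:ℝ) < Real.exp (-s) := Real.exp_pos _
  nlinarith [sq_nonneg (Real.exp (-s) - 1 + s), sq_nonneg (Real.exp (-s) - 1)]

lemma cosh_add_cosh (u v : ℝ) :
    Real.cosh (u + v) + Real.cosh (u - v) = 2 * Real.cosh u * Real.cosh v := by
  rw [Real.cosh_add, Real.cosh_sub]; ring

lemma cosh_diff (p q : ℝ) :
    Real.cosh p - Real.cosh q = 2 * Real.sinh ((p+q)/2) * Real.sinh ((p-q)/2) := by
  have A := Real.cosh_add ((p+q)/2) ((p-q)/2)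
  have B := Real.cosh_sub ((p+q)/2) ((p-q)/2)
  have hA : (p+q)/2 + (p-q)/2 = p := by ring
  have hB : (p+q)/2 - (p-q)/2 = q := by ring
  rw [hA] at A
  rw [hB] at B
  rw [A, B]; ring

lemma cosh_le_quad {a : ℝ} (h0 : 0 ≤ a) (h1 : a ≤ 1) : Real.cosh a ≤ 1 + 2 * a^2 := by
  have := cosh_diff a 0
  rw [Real.cosh_zero] at this
  have hs : Real.sinh (a/2) ≤ 2 * (a/2) := sinh_le_two_mul (by linarith) (by linarith)
  have hs0 : 0 ≤ Real.sinh (a/2) := Real.sinh_nonneg_iff.2 (by linarith)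
  have key : 2 * Real.sinh ((a+0)/2) * Real.sinh ((a-0)/2) ≤ 2 * a^2 := by
    have e : (a+0)/2 = a/2 := by ring
    have e' : (a-0)/2 = a/2 := by ring
    rw [e, e']
    nlinarith
  linarith

set_option maxHeartbeats 2000000 in
/-- For every `μ ∈ ℝ` there is `C(μ) > 0` such that, uniformly over `n ≥ 1` with
`1 - μ/√n ≥ 0`, the total mass of the weighted half-space kernel with reflection rate
`γ = 1 - μ/√n` satisfies `∑_{x ≥ 0} p_γ(n,0,x) ≤ C(μ)`. -/
theorem pGamma_total_mass_bounded (μ : ℝ) :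
    ∃ C : ℝ, 0 < C ∧ ∀ n : ℕ, 1 ≤ n → 0 ≤ 1 - μ / Real.sqrt n →
      ∑' x : ℕ, pGamma (1 - μ / Real.sqrt n) n 0 x ≤ C := by
  set m := |μ| with hm
  have hm0 : 0 ≤ m := abs_nonneg μ
  have hsinh1 : 0 < Real.sinh 1 := Real.sinh_pos_iff.2 one_pos
  have hcosh2 : (1:ℝ) ≤ Real.cosh 2 := Real.one_le_cosh 2
  set θ : ℝ := (m+1) * Real.cosh 2 / Real.sinh 1 with hθdef
  have hθ0 : 0 < θ := by
    apply div_pos _ hsinh1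
    nlinarith
  set n₀ : ℕ := ⌈θ^2⌉₊ with hn₀
  refine ⟨(1+m)^(n₀+1) + (1+m)^2 * Real.exp (2*θ^2) * Real.cosh 2, ?_, ?_⟩
  · have h1 : (0:ℝ) < (1+m)^(n₀+1) := by positivity
    have h2 : (0:ℝ) < (1+m)^2 * Real.exp (2*θ^2) * Real.cosh 2 := by
      have : (0:ℝ) < Real.cosh 2 := by linarith
      positivity
    linarith
  intro n hn hγpos
  have hn0 : (0:ℝ) < n := by exact_mod_cast Nat.pos_of_ne_zero (by omega)
  have hsq1 : (1:ℝ) ≤ Real.sqrt n := by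
    rw [show (1:ℝ) = Real.sqrt 1 by rw [Real.sqrt_one]]
    apply Real.sqrt_le_sqrt
    exact_mod_cast hn
  have hsq0 : (0:ℝ) < Real.sqrt n := by linarith
  set γ : ℝ := 1 - μ / Real.sqrt n with hγdef
  set γ' : ℝ := 1 + m / Real.sqrt n with hγ'def
  have hγγ' : γ ≤ γ' := by
    rw [hγdef, hγ'def]
    have h1 : -μ ≤ m := neg_le_abs μ
    have h2 : (1:ℝ) - μ / Real.sqrt n = 1 + (-μ) / Real.sqrt n := by ring
    rw [h2]
    gcongr
  have hγ'1 : 1 ≤ γ' := by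
    rw [hγ'def]
    have : 0 ≤ m / Real.sqrt n := by positivity
    linarith
  have hγ'le : γ' ≤ 1 + m := by
    rw [hγ'def]
    have : m / Real.sqrt n ≤ m := by
      rw [div_le_iff₀ hsq0]
      nlinarith
    linarith
  clear_value γ γ' θ n₀ m
  rw [tsum_pGamma_eq]
  rcases lt_or_ge n n₀ with hsmall | hlarge
  · have hb := mass_le γ γ' γ' (fun _ => 1) n hγpos hγγ' hγ'1 hγ'1 (fun _ => le_refl 1)
      (by simp) (by intro x; simp; linarith)
    apply le_trans hb
    have h1 : γ' * (γ' ^ n * 1) = γ' ^ (n+1) := by ring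
    rw [h1]
    have h2 : γ' ^ (n+1) ≤ (1+m) ^ (n+1) := pow_le_pow_left₀ (by linarith) hγ'le _
    have h3 : (1+m)^(n+1) ≤ (1+m)^(n₀+1) := pow_le_pow_right₀ (by linarith) (by omega)
    have h4 : (0:ℝ) < (1+m)^2 * Real.exp (2*θ^2) * Real.cosh 2 := by
      have : (0:ℝ) < Real.cosh 2 := by linarith
      positivity
    linarith
  · have hθn : θ^2 ≤ (n:ℝ) := by
      rw [hn₀] at hlarge
      exact Nat.ceil_le.1 hlarge
    set a : ℝ := θ / Real.sqrt n with hadef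
    clear_value a
    have ha0 : 0 < a := hadef ▸ div_pos hθ0 hsq0
    have ha1 : a ≤ 1 := by
      rw [hadef, div_le_one hsq0]
      exact (Real.le_sqrt hθ0.le (le_of_lt hn0)).2 hθn
    have hca : 1 ≤ Real.cosh a := Real.one_le_cosh a
    have hca0 : 0 ≤ Real.cosh a := by linarith
    set φ : ℕ → ℝ := fun x => if x = 0 then γ' * Real.cosh (a - 2) else Real.cosh (a * x - 2)
      with hφdef
    have hcosh1 : ∀ t : ℝ, (1:ℝ) ≤ Real.cosh t := Real.one_le_cosh
    have hφ0val : φ 0 = γ' * Real.cosh (a - 2) := by simp [hφdef]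
    have hφ1val : φ 1 = Real.cosh (a - 2) := by
      simp only [hφdef]
      norm_num
    have hφsucc : ∀ y : ℕ, φ (y+1) = Real.cosh (a * ((y:ℝ)+1) - 2) := by
      intro y
      simp only [hφdef]
      norm_num
    have hφ1 : ∀ x, 1 ≤ φ x := by
      intro x
      cases x with
      | zero =>
        rw [hφ0val]
        nlinarith [hcosh1 (a-2)]
      | succ y =>
        rw [hφsucc]
        exact hcosh1 _
    have hc22 : Real.cosh (a - 2) = Real.cosh (2 - a) := by
      rw [show a - 2 = -(2 - a) by ring, Real.cosh_neg]
    have hch : Real.cosh (2 - a) ≤ Real.cosh 2 := by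
      rw [Real.cosh_le_cosh]
      rw [abs_of_nonneg (by linarith), abs_of_nonneg (by norm_num)]
      linarith
    have hkey : γ' * Real.cosh (a - 2) ≤ Real.cosh 2 := by
      have e2 := cosh_diff 2 (2-a)
      have e3 : (2 + (2 - a))/2 = 2 - a/2 := by ring
      have e4 : (2 - (2 - a))/2 = a/2 := by ring
      rw [e3, e4] at e2
      have s1 : Real.sinh 1 ≤ Real.sinh (2 - a/2) := Real.sinh_le_sinh.2 (by linarith)
      have s2 : a/2 ≤ Real.sinh (a/2) := (Real.self_lt_sinh_iff.2 (by linarith)).le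
      have s3 : (0:ℝ) ≤ a/2 := by linarith
      have lower : a * Real.sinh 1 ≤ Real.cosh 2 - Real.cosh (2 - a) := by
        rw [e2]
        nlinarith [s1, s2, hsinh1, s3]
      have ha' : a * Real.sinh 1 = (m+1) * Real.cosh 2 / Real.sqrt n := by
        rw [hadef, hθdef]
        field_simp
      have t1 : m / Real.sqrt n * Real.cosh (2 - a) ≤ m / Real.sqrt n * Real.cosh 2 :=
        mul_le_mul_of_nonneg_left hch (by positivity)
      have t2 : m / Real.sqrt n * Real.cosh 2 ≤ (m+1) * Real.cosh 2 / Real.sqrt n := by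
        rw [div_mul_eq_mul_div]
        gcongr
        nlinarith
      rw [hc22]
      have expand : γ' * Real.cosh (2 - a) =
          Real.cosh (2 - a) + m / Real.sqrt n * Real.cosh (2-a) := by
        rw [hγ'def]; ring
      linarith
    have h0 : γ' * φ 1 ≤ Real.cosh a * φ 0 := by
      rw [hφ1val, hφ0val]
      have hx0 : (0:ℝ) ≤ γ' * Real.cosh (a - 2) := by nlinarith [hcosh1 (a-2)]
      nlinarith
    have h1 : ∀ x : ℕ, φ (x+2) + φ x ≤ 2 * Real.cosh a * φ (x+1) := by
      intro x
      cases x with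
      | zero =>
        rw [hφ0val, hφ1val, hφsucc 1]
        have id := cosh_add_cosh (a-2) a
        have e2 : a - 2 - a = -2 := by ring
        rw [e2, Real.cosh_neg] at id
        push_cast
        have hkey2 := hkey
        ring_nf at id hkey2 ⊢
        linarith
      | succ y =>
        rw [hφsucc (y+2), hφsucc y, hφsucc (y+1)]
        have id := cosh_add_cosh (a * ((y:ℝ)+2) - 2) a
        have e1 : a * ((y:ℝ)+2) - 2 + a = a * (((y:ℝ)+2)+1) - 2 := by ring
        have e2 : a * ((y:ℝ)+2) - 2 - a = a * ((y:ℝ)+1) - 2 := by ring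
        rw [e1, e2] at id
        push_cast
        push_cast at id
        ring_nf at id ⊢
        linarith
    have hb := mass_le γ γ' (Real.cosh a) φ n hγpos hγγ' hγ'1 (hcosh1 a) hφ1 h0 h1
    apply le_trans hb
    have hpow : Real.cosh a ^ n ≤ Real.exp (2*θ^2) := by
      have p1 : Real.cosh a ^ n ≤ (1 + 2*a^2)^n :=
        pow_le_pow_left₀ hca0 (cosh_le_quad ha0.le ha1) n
      have p2 : (1 + 2*a^2)^n ≤ (Real.exp (2*a^2))^n :=
        pow_le_pow_left₀ (by positivity) (by linarith [Real.add_one_le_exp (2*a^2)]) n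
      have p3 : (Real.exp (2*a^2))^n = Real.exp (n * (2*a^2)) := (Real.exp_nat_mul _ n).symm
      have p4 : (n:ℝ) * (2*a^2) = 2*θ^2 := by
        rw [hadef, div_pow, Real.sq_sqrt hn0.le]
        field_simp
      calc Real.cosh a ^ n ≤ (1 + 2*a^2)^n := p1
        _ ≤ (Real.exp (2*a^2))^n := p2
        _ = Real.exp ((n:ℝ) * (2*a^2)) := p3
        _ = Real.exp (2*θ^2) := by rw [p4]
    rw [hφ0val]
    have hγ'0 : (0:ℝ) ≤ γ' := by linarith
    have hexp0 : (0:ℝ) ≤ Real.exp (2*θ^2) := (Real.exp_pos _).le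
    have hcc : Real.cosh (a-2) ≤ Real.cosh 2 := by rw [hc22]; exact hch
    have hcc0 : (0:ℝ) ≤ Real.cosh (a-2) := by linarith [hcosh1 (a-2)]
    have main : γ' * (Real.cosh a ^ n * (γ' * Real.cosh (a - 2))) ≤
        (1+m)^2 * Real.exp (2*θ^2) * Real.cosh 2 := by
      have hpown : (0:ℝ) ≤ Real.cosh a ^ n := pow_nonneg hca0 n
      calc γ' * (Real.cosh a ^ n * (γ' * Real.cosh (a - 2)))
          = (γ' * γ') * Real.cosh a ^ n * Real.cosh (a-2) := by ring
        _ ≤ ((1+m) * (1+m)) * Real.exp (2*θ^2) * Real.cosh 2 := by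
            apply mul_le_mul
            · apply mul_le_mul
              · nlinarith
              · exact hpow
              · exact hpown
              · nlinarith
            · exact hcc
            · exact hcc0
            · positivity
        _ = (1+m)^2 * Real.exp (2*θ^2) * Real.cosh 2 := by ring
    have hfirst : (0:ℝ) ≤ (1+m)^(n₀+1) := by positivity
    linarith
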